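/- Let 1 → N → G → Q → 1 be an exact sequence of groups and A an abelian group with trivial G-action. Then the inflation map Inf : H²(Q, A) → H²(G, A) and the restriction map Res : H²(G, A) → H²(N, A)^Q fit into an exact sequence H¹(G, A) → H¹(N, A)^Q → H²(Q, A) → H²(G, A), i.e. the inflation-restriction exact sequence holds in degree ≤ 2. -/
import Mathlib


/-- A 2-cocycle with trivial action, written multiplicatively. -/
def IsCocycle2 {Q : Type*} [Group Q] {A : Type*} [CommGroup A] (c : Q → Q → A) : Prop :=
  ∀ p q r : Q, c q r * c p (q * r) = c (p * q) r * c p q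

/-- the inflation-restriction exact sequence in degree ≤ 2 for a trivial
module `A`: `H¹(G,A) → H¹(N,A)^Q → H²(Q,A) → H²(G,A)` is exact, where `1 → N → G → Q → 1`
is exact, the transgression is defined via a section `s` of `π : G → Q` with factor set
`nf p q = s(p)s(q)s(pq)⁻¹ ∈ N`. -/
theorem stmt1 {G Q : Type*} [Group G] [Group Q] {A : Type*} [CommGroup A]
    (π : G →* Q) (hπ : Function.Surjective π)
    (N : Subgroup G) (hN : π.ker = N)
    (s : Q → G) (hs : ∀ q : Q, π (s q) = q) (hs1 : s 1 = 1)
    (nf : Q → Q → N) (hnf : ∀ p q : Q, ((nf p q : N) : G) = s p * s q * (s (p * q))⁻¹) :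
    -- the restriction of a hom G → A to N is Q-invariant, and its transgression is a
    -- coboundary (exactness: im(res) ⊆ ker(tg)):
    (∀ f : G →* A,
      (∀ (m : N) (g : G), f (g⁻¹ * (m : G) * g) = f (m : G)) ∧
      ∃ b : Q → A, ∀ p q : Q, f ((nf p q : N) : G) = b q * (b (p * q))⁻¹ * b p) ∧
    -- ker(tg) ⊆ im(res): an invariant hom with transgression a coboundary extends to G:
    (∀ χ : N →* A, (∀ (m : N) (g : G), χ ⟨g⁻¹ * (m : G) * g, by
          have : ((m : G) ∈ π.ker) := hN ▸ m.2
          simp [← hN, MonoidHom.mem_ker] at this ⊢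
          simp [this]⟩ = χ m) →
      (∃ b : Q → A, ∀ p q : Q, χ (nf p q) = b q * (b (p * q))⁻¹ * b p) →
      ∃ f : G →* A, ∀ m : N, f (m : G) = χ m) ∧
    -- the transgression of an invariant hom is a 2-cocycle on Q whose inflation to G is
    -- a coboundary (exactness: im(tg) ⊆ ker(Inf)):
    (∀ χ : N →* A, (∀ (m : N) (g : G), χ ⟨g⁻¹ * (m : G) * g, by
          have : ((m : G) ∈ π.ker) := hN ▸ m.2
          simp [← hN, MonoidHom.mem_ker] at this ⊢
          simp [this]⟩ = χ m) →
      IsCocycle2 (fun p q => χ (nf p q)) ∧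
      ∃ b : G → A, ∀ g h : G, χ (nf (π g) (π h)) = b h * (b (g * h))⁻¹ * b g) ∧
    -- ker(Inf) ⊆ im(tg): a 2-cocycle on Q inflating to a coboundary on G is, modulo a
    -- coboundary on Q, the transgression of an invariant hom:
    (∀ c : Q → Q → A, IsCocycle2 c →
      (∃ b : G → A, ∀ g h : G, c (π g) (π h) = b h * (b (g * h))⁻¹ * b g) →
      ∃ χ : N →* A, (∀ (m : N) (g : G), χ ⟨g⁻¹ * (m : G) * g, by
          have : ((m : G) ∈ π.ker) := hN ▸ m.2
          simp [← hN, MonoidHom.mem_ker] at this ⊢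
          simp [this]⟩ = χ m) ∧
        ∃ b' : Q → A, ∀ p q : Q,
          c p q = χ (nf p q) * (b' q * (b' (p * q))⁻¹ * b' p)) := by

  have hNker : ∀ x : G, π x = 1 → x ∈ N := fun x hx =>
    (le_of_eq hN) (MonoidHom.mem_ker.mpr hx)
  have hmem : ∀ m : N, π (m : G) = 1 := fun m =>
    MonoidHom.mem_ker.mp ((le_of_eq hN.symm) m.2)
  have hρ : ∀ g : G, g * (s (π g))⁻¹ ∈ N := by
    intro g
    apply hNker
    simp [hs]
  have hconjmem : ∀ (m : N) (g : G), g⁻¹ * (m : G) * g ∈ N := by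
    intro m g
    apply hNker
    simp [hmem m]
  have hkey : ∀ (χ : N →* A),
      (∀ (m : N) (g : G), χ ⟨g⁻¹ * (m : G) * g, hconjmem m g⟩ = χ m) →
      ∀ g h : G,
        χ ⟨g * h * (s (π (g * h)))⁻¹, hρ _⟩
          = χ ⟨g * (s (π g))⁻¹, hρ g⟩ * χ ⟨h * (s (π h))⁻¹, hρ h⟩
            * χ (nf (π g) (π h)) := by
    intro χ hinv g h
    have hmemc : s (π g) * (h * (s (π h))⁻¹) * (s (π g))⁻¹ ∈ N := by
      apply hNker
      simp [hs]
    have e1 : (⟨g * h * (s (π (g * h)))⁻¹, hρ _⟩ : N)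
        = ⟨g * (s (π g))⁻¹, hρ g⟩ * ⟨s (π g) * (h * (s (π h))⁻¹) * (s (π g))⁻¹, hmemc⟩
          * nf (π g) (π h) := by
      apply Subtype.ext
      push_cast [hnf]
      rw [map_mul π g h]
      group
    have e2 : χ ⟨s (π g) * (h * (s (π h))⁻¹) * (s (π g))⁻¹, hmemc⟩
        = χ ⟨h * (s (π h))⁻¹, hρ h⟩ := by
      have h3 := hinv ⟨h * (s (π h))⁻¹, hρ h⟩ (s (π g))⁻¹
      simpa using h3
    rw [e1, map_mul, map_mul, e2]
  refine ⟨?_, ?_, ?_, ?_⟩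
  · -- part 1
    intro f
    constructor
    · intro m g
      rw [map_mul, map_mul, map_inv, mul_comm ((f g)⁻¹) (f (m : G)), mul_assoc,
        inv_mul_cancel, mul_one]
    · refine ⟨fun q => f (s q), fun p q => ?_⟩
      rw [hnf, map_mul, map_mul, map_inv]
      simp [mul_comm, mul_left_comm, mul_assoc]
  · -- part 2
    rintro χ hinv ⟨b, hb⟩
    have hnf11 : nf 1 1 = 1 := by
      apply Subtype.ext
      push_cast [hnf]
      simp [hs1]
    have hb1 : b 1 = 1 := by
      have h := hb 1 1
      rw [hnf11, map_one] at h
      simpa using h.symm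
    refine ⟨MonoidHom.mk' (fun g => χ ⟨g * (s (π g))⁻¹, hρ g⟩ * b (π g)) ?_, ?_⟩
    · intro g h
      show χ ⟨g * h * (s (π (g * h)))⁻¹, hρ _⟩ * b (π (g * h))
        = (χ ⟨g * (s (π g))⁻¹, hρ g⟩ * b (π g)) * (χ ⟨h * (s (π h))⁻¹, hρ h⟩ * b (π h))
      rw [hkey χ hinv g h, hb, map_mul π g h]
      simp [mul_comm, mul_left_comm, mul_assoc]
    · intro m
      show χ ⟨(m : G) * (s (π (m : G)))⁻¹, hρ _⟩ * b (π (m : G)) = χ m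
      have e : (⟨(m : G) * (s (π (m : G)))⁻¹, hρ _⟩ : N) = m := by
        apply Subtype.ext
        simp [hmem m, hs1]
      rw [e, hmem m, hb1, mul_one]
  · -- part 3
    intro χ hinv
    constructor
    · intro p q r
      show χ (nf q r) * χ (nf p (q * r)) = χ (nf (p * q) r) * χ (nf p q)
      have hmemc : s p * ((nf q r : N) : G) * (s p)⁻¹ ∈ N := by
        apply hNker
        simp [hs, hmem]
      have e1 : (⟨s p * ((nf q r : N) : G) * (s p)⁻¹, hmemc⟩ : N) * nf p (q * r)
          = nf p q * nf (p * q) r := by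
        apply Subtype.ext
        push_cast [hnf]
        rw [mul_assoc p q r]
        group
      have e2 : χ ⟨s p * ((nf q r : N) : G) * (s p)⁻¹, hmemc⟩ = χ (nf q r) := by
        have h3 := hinv (nf q r) (s p)⁻¹
        simpa using h3
      have e3 := congrArg χ e1
      rw [map_mul, map_mul, e2] at e3
      rw [e3, mul_comm]
    · refine ⟨fun g => (χ ⟨g * (s (π g))⁻¹, hρ g⟩)⁻¹, fun g h => ?_⟩
      show χ (nf (π g) (π h))
        = (χ ⟨h * (s (π h))⁻¹, hρ h⟩)⁻¹ * ((χ ⟨g * h * (s (π (g * h)))⁻¹, hρ _⟩)⁻¹)⁻¹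
          * (χ ⟨g * (s (π g))⁻¹, hρ g⟩)⁻¹
      rw [hkey χ hinv g h]
      simp [mul_comm, mul_left_comm, mul_assoc]
  · -- part 4
    rintro c hc ⟨b, hb⟩
    have hc1 : ∀ r : Q, c 1 r = c 1 1 := by
      intro r
      have h := hc 1 1 r
      simp only [one_mul] at h
      exact mul_left_cancel h
    have hcr1 : ∀ p : Q, c p 1 = c 1 1 := by
      intro p
      have h := hc p 1 1
      simp only [mul_one, one_mul] at h
      have h2 : c p 1 * c p 1 = c p 1 * c 1 1 := by rw [← h, mul_comm]
      exact mul_left_cancel h2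
    have hb1 : b 1 = c 1 1 := by
      have h := hb 1 1
      simp only [map_one, mul_one] at h
      have : c 1 1 = b 1 := by simpa using h
      exact this.symm
    have solve : ∀ x y z w : A, w = y * x⁻¹ * z → x = y * z * w⁻¹ := by
      intro x y z w h
      rw [h]
      simp [mul_comm, mul_left_comm, mul_assoc]
    have hbl : ∀ m h : G, π m = 1 → b (m * h) = b m * b h * (b 1)⁻¹ := by
      intro m h hm
      have h1 := hb m h
      rw [hm, hc1, ← hb1] at h1
      have h2 := solve _ _ _ _ h1
      rw [h2]
      simp [mul_comm, mul_left_comm, mul_assoc]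
    have hbr : ∀ g m : G, π m = 1 → b (g * m) = b g * b m * (b 1)⁻¹ := by
      intro g m hm
      have h1 := hb g m
      rw [hm, hcr1, ← hb1] at h1
      have h2 := solve _ _ _ _ h1
      rw [h2]
      simp [mul_comm, mul_left_comm, mul_assoc]
    have hconj : ∀ (g m : G), π m = 1 → b (g⁻¹ * m * g) = b m := by
      intro g m hm
      have h1 := hb (g⁻¹ * m) g
      have hπ1 : π (g⁻¹ * m) = (π g)⁻¹ := by simp [hm]
      rw [hπ1] at h1
      have h2 := hb g⁻¹ g
      rw [map_inv] at h2
      have e1 : b (g⁻¹ * m * g) = b g * b (g⁻¹ * m) * (c (π g)⁻¹ (π g))⁻¹ :=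
        solve _ _ _ _ h1
      have e2 : b (g⁻¹ * g) = b g * b g⁻¹ * (c (π g)⁻¹ (π g))⁻¹ := solve _ _ _ _ h2
      rw [inv_mul_cancel] at e2
      have e3 : b (g⁻¹ * m) = b g⁻¹ * b m * (b 1)⁻¹ := hbr g⁻¹ m hm
      rw [e1, e3]
      calc b g * (b g⁻¹ * b m * (b 1)⁻¹) * (c (π g)⁻¹ (π g))⁻¹
          = (b g * b g⁻¹ * (c (π g)⁻¹ (π g))⁻¹) * b m * (b 1)⁻¹ := by
            simp [mul_comm, mul_left_comm, mul_assoc]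
        _ = b 1 * b m * (b 1)⁻¹ := by rw [← e2]
        _ = b m := by
            rw [mul_comm (b 1) (b m), mul_assoc, mul_inv_cancel, mul_one]
    refine ⟨MonoidHom.mk' (fun m : N => (b (m : G))⁻¹ * b 1) ?_, ?_, fun q => b (s q), ?_⟩
    · intro m n
      show (b ((m : G) * (n : G)))⁻¹ * b 1
        = ((b (m : G))⁻¹ * b 1) * ((b (n : G))⁻¹ * b 1)
      rw [hbl _ _ (hmem m)]
      simp [mul_comm, mul_left_comm, mul_assoc]
    · intro m g
      show (b (g⁻¹ * (m : G) * g))⁻¹ * b 1 = (b (m : G))⁻¹ * b 1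
      rw [hconj g (m : G) (hmem m)]
    · intro p q
      show c p q = ((b ((nf p q : N) : G))⁻¹ * b 1)
        * (b (s q) * (b (s (p * q)))⁻¹ * b (s p))
      have h1 := hb (s p) (s q)
      rw [hs, hs] at h1
      have h2 : s p * s q = ((nf p q : N) : G) * s (p * q) := by
        rw [hnf]
        group
      have h3 : b (s p * s q) = b ((nf p q : N) : G) * b (s (p * q)) * (b 1)⁻¹ := by
        rw [h2]
        exact hbl _ _ (hmem _)
      rw [h1, h3]
      simp [mul_comm, mul_left_comm, mul_assoc]
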